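/- Suppose k+1 unit-speed agents search the n vertices of a regular n-gon inscribed in the unit circle, where the Queen may start at the center and each of the k Servants starts at a vertex, Servants traverse the polygon boundary partitioned into k contiguous arcs as evenly as possible, and the Queen moves to the exit once found. Then the worst-case evacuation cost is at most 1 + (⌈n/k⌉ − 1)·e_n, where e_n = 2·sin(π/n). In particular, the optimal priority evacuation cost on the n-gon with k Servants is at most 1 + (⌈n/k⌉ − 1)·2·sin(π/n). -/

import Mathlib

/-- Vertex `i` of the regular `n`-gon inscribed in the unit circle. -/
noncomputable def vert (n i : ℕ) : EuclideanSpace ℝ (Fin 2) :=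
  WithLp.toLp 2 ![Real.cos (2 * i * Real.pi / n), Real.sin (2 * i * Real.pi / n)]

/-- A feasible strategy for the priority evacuation problem `PE(n,k)`:
`k+1` unit-speed (1-Lipschitz) trajectories (agent `0` is the Queen) such that
every vertex of the `n`-gon is eventually visited by some agent. -/
structure PEStrategy (n k : ℕ) where
  τ : Fin (k + 1) → ℝ → EuclideanSpace ℝ (Fin 2)
  lip : ∀ a, LipschitzWith 1 (τ a)
  covers : ∀ j : Fin n, ∃ t : ℝ, 0 ≤ t ∧ ∃ a, τ a t = vert n ((j : ℕ) + 1)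

/-- The first time vertex `j` is visited by some agent. -/
noncomputable def firstVisit {n k : ℕ} (S : PEStrategy n k) (j : Fin n) : ℝ :=
  sInf {t : ℝ | 0 ≤ t ∧ ∃ a, S.τ a t = vert n ((j : ℕ) + 1)}

/-- The worst-case (over exit placements) evacuation cost of a strategy: visitation
time of the exit plus the Queen's distance to it at that time. -/
noncomputable def evacCost {n k : ℕ} (S : PEStrategy n k) : ℝ :=
  ⨆ j : Fin n, (firstVisit S j + dist (vert n ((j : ℕ) + 1)) (S.τ 0 (firstVisit S j)))

/-! ### Auxiliary lemmas -/

lemma vert_norm (n i : ℕ) : ‖vert n i‖ = 1 := by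
  rw [EuclideanSpace.norm_eq]
  simp only [vert, PiLp.toLp_apply, Fin.sum_univ_two, Matrix.cons_val_zero, Matrix.cons_val_one, Matrix.head_cons,
    Real.norm_eq_abs, sq_abs]
  rw [Real.cos_sq_add_sin_sq, Real.sqrt_one]

lemma vert_add_n (n i : ℕ) (hn : n ≠ 0) : vert n (i + n) = vert n i := by
  have hn' : (n : ℝ) ≠ 0 := Nat.cast_ne_zero.mpr hn
  have h : (2 * ((i:ℝ) + n) * Real.pi / n) = 2 * i * Real.pi / n + 2 * Real.pi := by
    field_simp
  unfold vert
  have h2 : ((i + n : ℕ) : ℝ) = (i : ℝ) + n := by push_cast; ring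
  rw [h2, h, Real.cos_add_two_pi, Real.sin_add_two_pi]

lemma vert_add_mul (n i q : ℕ) (hn : n ≠ 0) : vert n (i + n * q) = vert n i := by
  induction q with
  | zero => simp
  | succ q ih =>
      have : i + n * (q + 1) = (i + n * q) + n := by ring
      rw [this, vert_add_n _ _ hn, ih]

lemma chord_key (x y : ℝ) :
    (Real.cos (x + y) - Real.cos x)^2 + (Real.sin (x + y) - Real.sin x)^2
      = 2 - 2 * Real.cos y := by
  rw [Real.cos_add, Real.sin_add]
  linear_combination (Real.cos y^2 + Real.sin y^2 + 1 - 2*Real.cos y) * Real.sin_sq_add_cos_sq x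
    + Real.sin_sq_add_cos_sq y

lemma dist_vert_succ (n : ℕ) (hn : 3 ≤ n) (i : ℕ) :
    ‖vert n (i+1) - vert n i‖ = 2 * Real.sin (Real.pi / n) := by
  have hn' : (n : ℝ) ≠ 0 := Nat.cast_ne_zero.mpr (by omega)
  rw [← dist_eq_norm, EuclideanSpace.dist_eq]
  simp only [vert, PiLp.toLp_apply, Fin.sum_univ_two, Matrix.cons_val_zero, Matrix.cons_val_one, Matrix.head_cons,
    Real.dist_eq, sq_abs]
  have hβ : 2 * ((i:ℕ) + 1 : ℕ) * Real.pi / n = 2 * (i:ℝ) * Real.pi / n + 2 * (Real.pi / n) := by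
    push_cast; field_simp
  rw [hβ, chord_key]
  have h2 : 2 - 2 * Real.cos (2 * (Real.pi/n)) = (2 * Real.sin (Real.pi/n))^2 := by
    linear_combination (-2) * Real.cos_two_mul (Real.pi/n)
      + (-4) * Real.sin_sq_add_cos_sq (Real.pi/n)
  rw [h2, Real.sqrt_sq]
  have h3 : 0 ≤ Real.pi / n := by positivity
  have h4 : Real.pi / n ≤ Real.pi := by
    apply div_le_self Real.pi_pos.le
    exact_mod_cast by omega
  have := Real.sin_nonneg_of_nonneg_of_le_pi h3 h4
  linarith

noncomputable def clampU (x : ℝ) : ℝ := min (max x 0) 1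

lemma clampU_of_nonpos {x : ℝ} (h : x ≤ 0) : clampU x = 0 := by
  simp [clampU, max_eq_right h]

lemma clampU_of_one_le {x : ℝ} (h : 1 ≤ x) : clampU x = 1 := by
  simp only [clampU, min_def, max_def]
  split_ifs <;> linarith

lemma clampU_mono : Monotone clampU := fun a b h => by
  simp only [clampU, min_def, max_def]; split_ifs <;> linarith

lemma sum_clampU (u : ℝ) (M : ℕ) :
    ∑ r ∈ Finset.range M, clampU (u - r) = min (max u 0) M := by
  induction M with
  | zero => simp [min_eq_right (le_max_right u 0)]
  | succ M ih =>
      rw [Finset.sum_range_succ, ih]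
      push_cast
      simp only [clampU, min_def, max_def]
      split_ifs <;> linarith

lemma clampM_lip {M a b : ℝ} (hM : 0 ≤ M) (h : a ≤ b) :
    min (max b 0) M - min (max a 0) M ≤ b - a := by
  simp only [min_def, max_def]; split_ifs <;> linarith

/-- Piecewise-linear trajectory through vertices `b+1, b+2, …, b+M+1`, one edge per
time interval of length `c`. -/
noncomputable def traj (n : ℕ) (c : ℝ) (b M : ℕ) (t : ℝ) : EuclideanSpace ℝ (Fin 2) :=
  vert n (b + 1) +
    ∑ r ∈ Finset.range M, clampU (t / c - r) • (vert n (b + (r+1) + 1) - vert n (b + r + 1))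

lemma traj_at (n : ℕ) {c : ℝ} (hc : 0 < c) (b : ℕ) {M r : ℕ} (h : r ≤ M) :
    traj n c b M ((r : ℝ) * c) = vert n (b + r + 1) := by
  unfold traj
  have key : ∀ r' ∈ Finset.range M,
      clampU ((r:ℝ) * c / c - r') • (vert n (b + (r'+1) + 1) - vert n (b + r' + 1))
        = (if r' < r then vert n (b + (r'+1) + 1) - vert n (b + r' + 1) else 0) := by
    intro r' _
    rw [mul_div_assoc, div_self hc.ne', mul_one]
    by_cases hlt : r' < r
    · rw [if_pos hlt, clampU_of_one_le (by
        have : (r':ℝ) + 1 ≤ r := by exact_mod_cast hlt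
        linarith), one_smul]
    · rw [if_neg hlt, clampU_of_nonpos (by
        have : (r:ℝ) ≤ r' := by exact_mod_cast Nat.le_of_not_lt hlt
        linarith), zero_smul]
  rw [Finset.sum_congr rfl key, ← Finset.sum_filter]
  have hf : (Finset.range M).filter (· < r) = Finset.range r := by
    ext x; simp only [Finset.mem_filter, Finset.mem_range]; omega
  rw [hf, Finset.sum_range_sub (f := fun s => vert n (b + s + 1))]
  abel

lemma traj_lip (n : ℕ) {c : ℝ} (hc : 0 < c) (b M : ℕ)
    (hv : ∀ r : ℕ, ‖vert n (b + (r+1) + 1) - vert n (b + r + 1)‖ = c) :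
    LipschitzWith 1 (traj n c b M) := by
  have main : ∀ s t : ℝ, s ≤ t → dist (traj n c b M s) (traj n c b M t) ≤ t - s := by
    intro s t hst
    rw [dist_eq_norm]
    unfold traj
    rw [add_sub_add_left_eq_sub, ← Finset.sum_sub_distrib]
    simp only [← sub_smul]
    calc ‖∑ r ∈ Finset.range M,
            (clampU (s/c - r) - clampU (t/c - r)) • (vert n (b + (r+1) + 1) - vert n (b + r + 1))‖
        ≤ ∑ r ∈ Finset.range M,
            ‖(clampU (s/c - r) - clampU (t/c - r)) • (vert n (b + (r+1) + 1) - vert n (b + r + 1))‖ :=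
          norm_sum_le _ _
      _ = ∑ r ∈ Finset.range M, (clampU (t/c - r) - clampU (s/c - r)) * c := by
          apply Finset.sum_congr rfl
          intro r _
          have hdc : s / c ≤ t / c := by gcongr
          have hm : clampU (s/c - r) ≤ clampU (t/c - r) := clampU_mono (by linarith)
          rw [norm_smul, hv r, Real.norm_eq_abs, abs_of_nonpos (by linarith)]
          ring
      _ = (min (max (t/c) 0) M - min (max (s/c) 0) M) * c := by
          rw [← sum_clampU (t/c) M, ← sum_clampU (s/c) M, ← Finset.sum_sub_distrib,
            Finset.sum_mul]
      _ ≤ (t/c - s/c) * c := by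
          apply mul_le_mul_of_nonneg_right _ hc.le
          apply clampM_lip (by positivity)
          gcongr
      _ = t - s := by field_simp
  apply LipschitzWith.of_dist_le_mul
  intro x y
  simp only [NNReal.coe_one, one_mul]
  rcases le_total x y with h | h
  · have := main x y h
    rw [Real.dist_eq, abs_of_nonpos (by linarith)]
    linarith
  · have := main y x h
    rw [dist_comm (traj n c b M x), Real.dist_eq, abs_of_nonneg (by linarith)]
    exact this

/-- There is a priority-evacuation strategy on the regular `n`-gon with `k` Servants in
which the Queen starts at the center and every Servant starts at a vertex, whose
worst-case evacuation cost is at most `1 + (⌈n/k⌉ − 1)·2 sin(π/n)`.  In particular the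
optimal cost of `PE(n,k)` is at most this bound. -/
theorem pe_upper_bound_center (n k : ℕ) (hk : 1 ≤ k) (hn : 3 ≤ n) :
    ∃ S : PEStrategy n k,
      S.τ 0 0 = 0 ∧
      (∀ a : Fin (k + 1), a ≠ 0 → ∃ m : ℕ, 1 ≤ m ∧ m ≤ n ∧ S.τ a 0 = vert n m) ∧
      evacCost S ≤ 1 + ((⌈(n : ℝ) / (k : ℝ)⌉₊ : ℝ) - 1) * (2 * Real.sin (Real.pi / n)) := by
  have hn0 : 0 < n := by omega
  have hk0 : 0 < k := hk
  set c : ℝ := 2 * Real.sin (Real.pi / n) with hc_def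
  have hπ1 : 0 < Real.pi / n := by positivity
  have hsin : 0 < Real.sin (Real.pi / n) :=
    Real.sin_pos_of_pos_of_lt_pi hπ1
      (div_lt_self Real.pi_pos (by exact_mod_cast (by omega : 1 < n)))
  have hc : 0 < c := by rw [hc_def]; linarith
  set m : ℕ := ⌈(n : ℝ) / (k : ℝ)⌉₊ with hm_def
  have hm : 0 < m := Nat.ceil_pos.mpr (by positivity)
  have hnkm : n ≤ k * m := by
    have h1 : (n : ℝ) / k ≤ m := Nat.le_ceil _
    have h2 : (n : ℝ) ≤ k * m := by
      rw [div_le_iff₀ (by exact_mod_cast hk0 : (0:ℝ) < k)] at h1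
      linarith [h1]
    exact_mod_cast h2
  have hv : ∀ b r : ℕ, ‖vert n (b + (r+1) + 1) - vert n (b + r + 1)‖ = c := by
    intro b r
    have := dist_vert_succ n hn (b + r + 1)
    have he : b + (r + 1) + 1 = (b + r + 1) + 1 := by omega
    rw [he, this]
  -- the strategy: the Queen (agent 0) stays at the center, Servant `a` walks along
  -- the chords through vertices `(a-1)·m+1, …, a·m`.
  set τf : Fin (k+1) → ℝ → EuclideanSpace ℝ (Fin 2) :=
    fun i t => if i = 0 then 0 else traj n c (((i : ℕ) - 1) * m) (m - 1) t with hτ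
  have hvisit : ∀ j : Fin n, ∃ a : Fin (k+1),
      τf a (((j : ℕ) % m : ℕ) * c) = vert n ((j : ℕ) + 1) := by
    intro j
    set a := (j : ℕ) / m with ha_def
    have hak : a < k := by
      rw [ha_def, Nat.div_lt_iff_lt_mul hm]
      calc (j : ℕ) < n := j.isLt
        _ ≤ k * m := hnkm
    refine ⟨⟨a + 1, by omega⟩, ?_⟩
    have hne : (⟨a + 1, by omega⟩ : Fin (k+1)) ≠ 0 := by
      simp [Fin.ext_iff]
    rw [hτ]
    simp only
    rw [if_neg hne]
    have hr : (j : ℕ) % m ≤ m - 1 := by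
      have := Nat.mod_lt (j : ℕ) hm; omega
    have h7 := traj_at n hc ((a + 1 - 1) * m) hr
    rw [h7]
    have e1 : a + 1 - 1 = a := Nat.succ_sub_one a
    have h5 := Nat.div_add_mod (j : ℕ) m
    rw [e1, ha_def, mul_comm, h5]
  have hlip : ∀ i, LipschitzWith 1 (τf i) := by
    intro i
    rw [hτ]
    by_cases h : i = 0
    · simp only [h, if_pos]
      exact (LipschitzWith.const (0 : EuclideanSpace ℝ (Fin 2))).weaken zero_le_one
    · simp only [if_neg h]
      exact traj_lip n hc _ _ (hv _)
  have hcov : ∀ j : Fin n, ∃ t : ℝ, 0 ≤ t ∧ ∃ a, τf a t = vert n ((j : ℕ) + 1) := by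
    intro j
    obtain ⟨a, ha⟩ := hvisit j
    exact ⟨_, by positivity, a, ha⟩
  refine ⟨⟨τf, hlip, hcov⟩, ?_, ?_, ?_⟩
  · simp [hτ]
  · intro a ha
    set b := ((a : ℕ) - 1) * m with hb_def
    have h0 := traj_at n hc b (M := m - 1) (r := 0) (Nat.zero_le _)
    rw [Nat.cast_zero, zero_mul] at h0
    have h5 := Nat.mod_add_div b n
    refine ⟨b % n + 1, by omega, by have := Nat.mod_lt b hn0; omega, ?_⟩
    have e : (b % n + 1) + n * (b / n) = b + 1 := by
      rw [add_right_comm, h5]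
    show τf a 0 = vert n (b % n + 1)
    rw [hτ]
    simp only
    rw [if_neg ha, h0]
    calc vert n (b + 0 + 1) = vert n ((b % n + 1) + n * (b / n)) := by rw [e, Nat.add_zero]
      _ = vert n (b % n + 1) := vert_add_mul _ _ _ (by omega)
  · haveI : Nonempty (Fin n) := ⟨⟨0, hn0⟩⟩
    apply ciSup_le
    intro j
    have hQ : ∀ t : ℝ, τf 0 t = 0 := fun t => by simp [hτ]
    have hd : dist (vert n ((j : ℕ) + 1))
        ((PEStrategy.mk τf hlip hcov).τ 0 (firstVisit (PEStrategy.mk τf hlip hcov) j)) = 1 := by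
      show dist (vert n ((j : ℕ) + 1)) (τf 0 (firstVisit (PEStrategy.mk τf hlip hcov) j)) = 1
      rw [hQ, dist_zero_right, vert_norm]
    rw [hd]
    have hfv : firstVisit (PEStrategy.mk τf hlip hcov) j ≤ (((j : ℕ) % m : ℕ) : ℝ) * c := by
      apply csInf_le ⟨0, fun x hx => hx.1⟩
      exact ⟨by positivity, hvisit j⟩
    have h6 : (j : ℕ) % m + 1 ≤ m := Nat.mod_lt _ hm
    have h7 : ((((j : ℕ) % m : ℕ)) : ℝ) + 1 ≤ (m : ℝ) := by exact_mod_cast h6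
    have h8 : (((j : ℕ) % m : ℕ) : ℝ) * c ≤ ((m : ℝ) - 1) * c :=
      mul_le_mul_of_nonneg_right (by linarith) hc.le
    linarith
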